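/- The function k(t) = (1+t⁷)⁵/(1+t⁵)⁷ is strictly decreasing on [0,1] and strictly increasing on [1,∞). -/

import Mathlib

private lemma k_hasDeriv (t : ℝ) (ht : (1:ℝ) + t ^ 5 ≠ 0) :
    HasDerivAt (fun t : ℝ => (1 + t ^ 7) ^ 5 / (1 + t ^ 5) ^ 7)
      (35 * t ^ 4 * (1 + t ^ 7) ^ 4 * (t ^ 2 - 1) / (1 + t ^ 5) ^ 8) t := by
  have hu : HasDerivAt (fun t : ℝ => (1 + t ^ 7) ^ 5)
      ((5 : ℕ) * (1 + t ^ 7) ^ 4 * (7 * t ^ 6)) t := by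
    have := ((hasDerivAt_pow 7 t).const_add 1).fun_pow 5
    simpa using this
  have hv : HasDerivAt (fun t : ℝ => (1 + t ^ 5) ^ 7)
      ((7 : ℕ) * (1 + t ^ 5) ^ 6 * (5 * t ^ 4)) t := by
    have := ((hasDerivAt_pow 5 t).const_add 1).fun_pow 7
    simpa using this
  have := hu.fun_div hv (pow_ne_zero 7 ht)
  refine this.congr_deriv ?_
  rw [div_eq_div_iff (pow_ne_zero 2 (pow_ne_zero 7 ht)) (pow_ne_zero 8 ht)]
  push_cast
  ring

private lemma k_denom_pos {t : ℝ} (ht : 0 ≤ t) : (0:ℝ) < 1 + t ^ 5 := by positivity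

private lemma k_cont : ContinuousOn (fun t : ℝ => (1 + t ^ 7) ^ 5 / (1 + t ^ 5) ^ 7)
    (Set.Ici 0) := by
  apply ContinuousOn.div (by fun_prop) (by fun_prop)
  intro t ht
  exact pow_ne_zero 7 (k_denom_pos ht).ne'

theorem k_monotonicity :
    let k : ℝ → ℝ := fun t => (1 + t ^ 7) ^ 5 / (1 + t ^ 5) ^ 7
    StrictAntiOn k (Set.Icc 0 1) ∧ StrictMonoOn k (Set.Ici 1) := by
  intro k
  constructor
  · apply strictAntiOn_of_deriv_neg (convex_Icc 0 1)
      (k_cont.mono (by intro x hx; exact hx.1))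
    intro t ht
    rw [interior_Icc] at ht
    rw [(k_hasDeriv t (k_denom_pos ht.1.le).ne').deriv]
    apply div_neg_of_neg_of_pos
    · have h1 : t ^ 2 - 1 < 0 := by nlinarith [ht.1, ht.2]
      have h2 : (0:ℝ) < 35 * t ^ 4 * (1 + t ^ 7) ^ 4 := by
        have := pow_pos ht.1 4
        have := pow_pos ht.1 7
        positivity
      nlinarith
    · exact pow_pos (k_denom_pos ht.1.le) 8
  · apply strictMonoOn_of_deriv_pos (convex_Ici 1)
      (k_cont.mono (by intro x hx; exact le_trans zero_le_one (show (1:ℝ) ≤ x from hx)))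
    intro t ht
    rw [interior_Ici] at ht
    have ht1 : (1:ℝ) < t := ht
    have ht0 : (0:ℝ) < t := lt_trans one_pos ht1
    rw [(k_hasDeriv t (k_denom_pos ht0.le).ne').deriv]
    apply div_pos
    · have h1 : (0:ℝ) < t ^ 2 - 1 := by nlinarith
      have h2 : (0:ℝ) < 35 * t ^ 4 * (1 + t ^ 7) ^ 4 := by
        have := pow_pos ht0 4
        have := pow_pos ht0 7
        positivity
      nlinarith
    · exact pow_pos (k_denom_pos ht0.le) 8
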